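/- The smallest positive real root of the polynomial p_k(z) = Σ_{n=0}^{⌊(k+2)/2⌋} (−1)^n binomial(k+2−n, n) z^n is ρ_k = 1/(4 cos²(π/(k+3))). Moreover all roots of p_k are real, positive, and simple. -/

import Mathlib

open Polynomial Real


noncomputable def qq (m : ℕ) : Polynomial ℝ :=
  ∑ n ∈ Finset.range (m/2+1), C ((-1:ℝ)^n * ((m-n).choose n : ℝ)) * X ^ n

lemma qq_coeff (m n : ℕ) :
    (qq m).coeff n = if n ≤ m/2 then (-1:ℝ)^n * ((m-n).choose n : ℝ) else 0 := by
  rw [qq, finset_sum_coeff]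
  simp only [coeff_C_mul, coeff_X_pow, mul_ite, mul_one, mul_zero]
  rw [Finset.sum_ite_eq (Finset.range (m/2+1)) n]
  simp [Nat.lt_succ_iff]

lemma pascal_step (m n' : ℕ) :
    (if n'+1 ≤ (m+2)/2 then ((-1:ℝ))^(n'+1) * ((m+2-(n'+1)).choose (n'+1):ℝ) else 0)
    = (if n'+1 ≤ (m+1)/2 then ((-1:ℝ))^(n'+1) * ((m+1-(n'+1)).choose (n'+1):ℝ) else 0)
      - (if n' ≤ m/2 then ((-1:ℝ))^n' * ((m-n').choose n':ℝ) else 0) := by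
  split_ifs with h1 h2 h3 h3
  · -- Pascal
    have e1 : m+2-(n'+1) = (m-n')+1 := by omega
    have e2 : m+1-(n'+1) = m-n' := by omega
    rw [e1, e2, Nat.choose_succ_succ]
    push_cast
    ring
  · omega
  · have e1 : m+2-(n'+1) = n'+1 := by omega
    have e2 : m-n' = n' := by omega
    rw [e1, e2, Nat.choose_self, Nat.choose_self]
    push_cast; ring
  · omega
  · omega
  · omega
  · have : m - n' < n' := by omega
    rw [Nat.choose_eq_zero_of_lt this]
    simp
  · simp

lemma qq_rec (m : ℕ) : qq (m+2) = qq (m+1) - X * qq m := by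
  ext n
  rcases n with _ | n'
  · simp [qq_coeff, coeff_sub, mul_comm X (qq m)]
  · rw [coeff_sub, coeff_X_mul, qq_coeff, qq_coeff, qq_coeff]
    exact pascal_step m n'

lemma qq_eval (θ : ℝ) (hc : Real.cos θ ≠ 0) (m : ℕ) :
    (qq m).eval (1/(4*Real.cos θ^2)) * (2*Real.cos θ)^m * Real.sin θ
      = Real.sin ((m+1)*θ) := by
  induction m using Nat.strong_induction_on with
  | _ m ih =>
    match m with
    | 0 => simp [qq]
    | 1 =>
      have : ((1:ℕ)+1:ℝ)*θ = 2*θ := by norm_num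
      rw [this, Real.sin_two_mul]
      simp [qq]
      ring
    | (n+2) =>
      have e1 := ih (n+1) (by omega)
      have e0 := ih n (by omega)
      rw [qq_rec, eval_sub, eval_mul, eval_X]
      have key : Real.sin (((n:ℝ)+2+1)*θ)
          = 2*Real.cos θ * Real.sin (((n:ℝ)+1+1)*θ) - Real.sin (((n:ℝ)+1)*θ) := by
        have h1 : ((n:ℝ)+2+1)*θ = ((n:ℝ)+1+1)*θ + θ := by ring
        have h2 : ((n:ℝ)+1)*θ = ((n:ℝ)+1+1)*θ - θ := by ring
        rw [h1, h2, Real.sin_add, Real.sin_sub]; ring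
      push_cast at e1 e0 ⊢
      rw [key, ← e1, ← e0]
      field_simp
      ring

/-- The smallest positive root of `p_k(z) = ∑_{n=0}^{⌊(k+2)/2⌋} (-1)ⁿ C(k+2-n,n) zⁿ`
is `ρ_k = 1/(4cos²(π/(k+3)))`, and all roots of `p_k` are real, positive and simple. -/
theorem stmt_11 :
    ∀ k : ℕ,
      ∀ P : Polynomial ℝ,
        P = ∑ n ∈ Finset.range ((k + 2) / 2 + 1),
          C ((-1 : ℝ) ^ n * (Nat.choose (k + 2 - n) n : ℝ)) * X ^ n →
        ∀ ρ : ℝ, ρ = 1 / (4 * Real.cos (π / (k + 3)) ^ 2) →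
          (P.roots.card = P.natDegree) ∧
          P.roots.Nodup ∧
          (∀ x ∈ P.roots, 0 < x) ∧
          ρ ∈ P.roots ∧
          (∀ x ∈ P.roots, ρ ≤ x) := by
  intro k P hP ρ hρ
  have hPq : P = qq (k+2) := by rw [hP, qq]
  set d : ℕ := (k+2)/2 with hd
  have hπ := Real.pi_pos
  set θf : ℕ → ℝ := fun j => (j:ℝ) * π / ((k:ℝ)+3) with hθf
  set z : ℕ → ℝ := fun j => 1/(4 * Real.cos (θf j)^2) with hz
  have hθpos : ∀ j ∈ Finset.Icc 1 d, 0 < θf j := by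
    intro j hj
    simp only [Finset.mem_Icc] at hj
    have h1 : (1:ℝ) ≤ (j:ℝ) := by exact_mod_cast hj.1
    have hk : (0:ℝ) < (k:ℝ)+3 := by positivity
    simp only [hθf]
    positivity
  have hθlt : ∀ j ∈ Finset.Icc 1 d, θf j < π/2 := by
    intro j hj
    simp only [Finset.mem_Icc] at hj
    have h2 : 2*j < k+3 := by omega
    have h2' : (2*(j:ℝ)) < (k:ℝ)+3 := by exact_mod_cast h2
    have hk : (0:ℝ) < (k:ℝ)+3 := by positivity
    simp only [hθf]
    rw [div_lt_div_iff₀ hk two_pos]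
    nlinarith
  have hcos : ∀ j ∈ Finset.Icc 1 d, 0 < Real.cos (θf j) := by
    intro j hj
    exact Real.cos_pos_of_mem_Ioo ⟨by linarith [hθpos j hj], hθlt j hj⟩
  have hsin : ∀ j ∈ Finset.Icc 1 d, 0 < Real.sin (θf j) := by
    intro j hj
    exact Real.sin_pos_of_pos_of_lt_pi (hθpos j hj) (by linarith [hθlt j hj])
  have hzpos : ∀ j ∈ Finset.Icc 1 d, 0 < z j := by
    intro j hj
    have := hcos j hj
    simp only [hz]
    positivity
  -- degree
  have hcoeffd : P.coeff d ≠ 0 := by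
    rw [hPq, qq_coeff]
    have hle : d ≤ (k+2)/2 := le_refl _
    rw [if_pos hle]
    have hdd : d ≤ k+2-d := by omega
    have : 0 < (k+2-d).choose d := Nat.choose_pos hdd
    have h0 : (0:ℝ) < ((k+2-d).choose d : ℝ) := by exact_mod_cast this
    intro h
    rcases mul_eq_zero.1 h with h' | h'
    · exact (pow_ne_zero d (by norm_num : (-1:ℝ) ≠ 0)) h'
    · linarith
  have hPne : P ≠ 0 := fun h => hcoeffd (by simp [h])
  have hdeg : P.natDegree = d := by
    have h1 : d ≤ P.natDegree := le_natDegree_of_ne_zero hcoeffd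
    have h2 : P.natDegree ≤ d := by
      rw [hP]
      apply natDegree_sum_le_of_forall_le
      intro i hi
      simp only [Finset.mem_range, Nat.lt_succ_iff] at hi
      exact le_trans (natDegree_C_mul_X_pow_le _ _) hi
    omega
  -- roots
  have hroot : ∀ j ∈ Finset.Icc 1 d, P.eval (z j) = 0 := by
    intro j hj
    have hc := (hcos j hj).ne'
    have he := qq_eval (θf j) hc (k+2)
    have harg : (((k+2:ℕ):ℝ)+1) * θf j = (j:ℝ)*π := by
      simp only [hθf]
      push_cast
      have hk : ((k:ℝ)+3) ≠ 0 := by positivity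
      field_simp
      ring
    rw [harg, Real.sin_nat_mul_pi] at he
    have h1 : (2*Real.cos (θf j))^(k+2) ≠ 0 := pow_ne_zero _ (by simpa using hc)
    have h2 : Real.sin (θf j) ≠ 0 := (hsin j hj).ne'
    have : (qq (k+2)).eval (z j) = 0 := by
      rcases mul_eq_zero.1 he with h | h
      · rcases mul_eq_zero.1 h with h' | h'
        · simpa [hz] using h'
        · exact absurd h' h1
      · exact absurd h h2
    rw [hPq]; exact this
  -- strict monotonicity of z on Icc 1 d
  have hmono : ∀ i ∈ Finset.Icc 1 d, ∀ j ∈ Finset.Icc 1 d, i < j → z i < z j := by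
    intro i hi j hj hij
    have hθij : θf i < θf j := by
      simp only [hθf]
      have hk : (0:ℝ) < (k:ℝ)+3 := by positivity
      have hij' : (i:ℝ) < (j:ℝ) := by exact_mod_cast hij
      rw [div_lt_div_iff₀ hk hk]
      have := mul_lt_mul_of_pos_right (mul_lt_mul_of_pos_right hij' hπ) hk
      linarith
    have hcc : Real.cos (θf j) < Real.cos (θf i) :=
      Real.cos_lt_cos_of_nonneg_of_le_pi (le_of_lt (hθpos i hi))
        (by linarith [hθlt j hj]) hθij
    have hcj := hcos j hj
    simp only [hz]
    apply one_div_lt_one_div_of_lt (by positivity)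
    nlinarith
  -- the finset of roots
  set S : Finset ℝ := (Finset.Icc 1 d).image z with hS
  have hinj : Set.InjOn z (Finset.Icc 1 d) := by
    intro i hi j hj hzij
    simp only [Finset.coe_Icc, Set.mem_Icc] at hi hj
    by_contra hne
    rcases lt_or_gt_of_ne hne with h | h
    · exact absurd hzij (ne_of_lt (hmono i (Finset.mem_Icc.2 hi) j (Finset.mem_Icc.2 hj) h))
    · exact absurd hzij.symm (ne_of_lt (hmono j (Finset.mem_Icc.2 hj) i (Finset.mem_Icc.2 hi) h))
  have hScard : S.card = d := by
    rw [hS, Finset.card_image_of_injOn hinj, Nat.card_Icc]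
    omega
  have hSle : S.val ≤ P.roots := by
    rw [Multiset.le_iff_subset S.nodup]
    intro a ha
    rw [Finset.mem_val, hS, Finset.mem_image] at ha
    obtain ⟨j, hj, rfl⟩ := ha
    rw [mem_roots hPne]
    exact hroot j hj
  have hSeq : P.roots = S.val := by
    symm
    apply Multiset.eq_of_le_of_card_le hSle
    calc Multiset.card P.roots ≤ P.natDegree := card_roots' P
      _ = d := hdeg
      _ = Multiset.card S.val := by rw [← hScard]; rfl
  have h1d : 1 ∈ Finset.Icc 1 d := by
    rw [Finset.mem_Icc]
    omega
  refine ⟨?_, ?_, ?_, ?_, ?_⟩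
  · rw [hSeq, hdeg]
    exact hScard
  · rw [hSeq]; exact S.nodup
  · intro x hx
    rw [hSeq, Finset.mem_val, hS, Finset.mem_image] at hx
    obtain ⟨j, hj, rfl⟩ := hx
    exact hzpos j hj
  · rw [hSeq, Finset.mem_val, hS, Finset.mem_image]
    refine ⟨1, h1d, ?_⟩
    rw [hρ]
    simp only [hz, hθf]
    norm_num
  · intro x hx
    rw [hSeq, Finset.mem_val, hS, Finset.mem_image] at hx
    obtain ⟨j, hj, rfl⟩ := hx
    have hρz : ρ = z 1 := by
      rw [hρ]; simp only [hz, hθf]; norm_num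
    rw [hρz]
    rcases eq_or_lt_of_le (Finset.mem_Icc.1 hj).1 with h | h
    · rw [← h]
    · exact le_of_lt (hmono 1 h1d j hj h)
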